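/- Let V₀ be a d×d positive definite real matrix, and let a₁,…,aₙ ∈ ℝ^d satisfy ‖aₜ‖₂ ≤ L for all t. Define Vₜ = V₀ + Σ_{s=1}^t aₛaₛᵀ. Then Σ_{t=1}^n min(1, ‖aₜ‖²_{V_{t-1}^{-1}}) ≤ 2 log(det Vₙ / det V₀). -/

import Mathlib

open Matrix Finset

private lemma vecMulVec_self_posSemidef {d : ℕ} (a : Fin d → ℝ) :
    (vecMulVec a a).PosSemidef := by
  refine posSemidef_iff_dotProduct_mulVec.mpr ⟨?_, ?_⟩
  · ext i j; simp [conjTranspose_apply, vecMulVec_apply, mul_comm]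
  · intro x
    have h : (vecMulVec a a) *ᵥ x = (a ⬝ᵥ x) • a := by
      ext i
      simp only [mulVec, vecMulVec_apply, dotProduct, Pi.smul_apply, smul_eq_mul,
        Finset.sum_mul, Finset.mul_sum]
      exact Finset.sum_congr rfl fun j _ => by ring
    rw [h, dotProduct_smul, star_trivial, smul_eq_mul, dotProduct_comm]
    exact mul_self_nonneg _

private lemma det_add_vecMulVec_self {d : ℕ} {A : Matrix (Fin d) (Fin d) ℝ} (hA : A.PosDef)
    (u : Fin d → ℝ) : (A + vecMulVec u u).det = A.det * (1 + u ⬝ᵥ A⁻¹ *ᵥ u) := by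
  rw [vecMulVec_eq (Fin 1), det_add_replicateCol_mul_replicateRow hA.det_pos.ne'.isUnit]
  congr 1
  rw [Matrix.mul_assoc, ← replicateCol_mulVec]
  simp only [Matrix.det_unique, Matrix.add_apply, Matrix.one_apply_eq, replicateRow_mul_replicateCol_apply]

private lemma min_one_le_two_log {x : ℝ} (hx : 0 ≤ x) : min 1 x ≤ 2 * Real.log (1 + x) := by
  rcases le_total x 1 with h | h
  · rw [min_eq_right h]
    have hx1 : (0:ℝ) < 1 + x := by linarith
    have hlog : x / 2 ≤ Real.log (1 + x) := by
      rw [Real.le_log_iff_exp_le hx1]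
      have h1 := Real.add_one_le_exp (-(x/2))
      have he : Real.exp (-(x/2)) * Real.exp (x/2) = 1 := by
        rw [← Real.exp_add]; simp
      nlinarith [Real.exp_pos (-(x/2)), Real.exp_pos (x/2)]
    linarith
  · rw [min_eq_left h]
    have h2 : Real.log 2 ≤ Real.log (1 + x) := Real.log_le_log (by norm_num) (by linarith)
    have := Real.log_two_gt_d9
    linarith

/-- Elliptical potential lemma, first inequality. Writing `a 0, …, a (n-1)` for the
vectors `a₁, …, aₙ` and `V t = V₀ + Σ_{s < t} aₛaₛᵀ` (so that `V (t-1)` is the matrix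
seen before round `t`), if `V₀` is positive definite and `‖aₜ‖₂ ≤ L` for all `t`, then
`Σ_{t=1}^n min(1, ‖aₜ‖²_{V_{t-1}⁻¹}) ≤ 2 log(det Vₙ / det V₀)`. -/
theorem elliptical_potential_first {d n : ℕ} (V₀ : Matrix (Fin d) (Fin d) ℝ)
    (hV₀ : V₀.PosDef) (a : ℕ → (Fin d → ℝ)) (L : ℝ)
    (hL : ∀ t < n, Real.sqrt (∑ i, (a t i) ^ 2) ≤ L)
    (V : ℕ → Matrix (Fin d) (Fin d) ℝ)
    (hV : ∀ t, V t = V₀ + ∑ s ∈ Finset.range t, vecMulVec (a s) (a s)) :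
    ∑ t ∈ Finset.range n, min 1 (a t ⬝ᵥ ((V t)⁻¹ *ᵥ a t)) ≤
      2 * Real.log ((V n).det / V₀.det) := by
  have hPD : ∀ t, (V t).PosDef := by
    intro t
    rw [hV t]
    refine hV₀.add_posSemidef ?_
    induction t with
    | zero => simpa using (Matrix.PosSemidef.zero (n := Fin d) (R := ℝ))
    | succ k ih =>
        rw [Finset.sum_range_succ]
        exact ih.add (vecMulVec_self_posSemidef (a k))
  set x : ℕ → ℝ := fun t => a t ⬝ᵥ ((V t)⁻¹ *ᵥ a t) with hxdef
  have hx0 : ∀ t, 0 ≤ x t := by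
    intro t
    have h := ((hPD t).inv).posSemidef.dotProduct_mulVec_nonneg (a t)
    simpa [hxdef] using h
  have hdet : ∀ t, (V (t+1)).det = (V t).det * (1 + x t) := by
    intro t
    have hstep : V (t+1) = V t + vecMulVec (a t) (a t) := by
      rw [hV, hV, Finset.sum_range_succ, add_assoc]
    rw [hstep, det_add_vecMulVec_self (hPD t)]
  have hx1pos : ∀ t, (0:ℝ) < 1 + x t := fun t => by have := hx0 t; linarith
  have hlog : ∀ t, Real.log (1 + x t)
      = Real.log ((V (t+1)).det) - Real.log ((V t).det) := by
    intro t
    rw [hdet t, Real.log_mul (hPD t).det_pos.ne' (hx1pos t).ne']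
    ring
  have hV0 : V 0 = V₀ := by rw [hV]; simp
  calc ∑ t ∈ Finset.range n, min 1 (a t ⬝ᵥ ((V t)⁻¹ *ᵥ a t))
      ≤ ∑ t ∈ Finset.range n, 2 * Real.log (1 + x t) :=
        Finset.sum_le_sum fun t _ => min_one_le_two_log (hx0 t)
    _ = 2 * ∑ t ∈ Finset.range n,
          (Real.log ((V (t+1)).det) - Real.log ((V t).det)) := by
        rw [Finset.mul_sum]
        exact Finset.sum_congr rfl fun t _ => by rw [hlog t]
    _ = 2 * (Real.log ((V n).det) - Real.log ((V 0).det)) := by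
        rw [Finset.sum_range_sub (fun t => Real.log ((V t).det))]
    _ = 2 * Real.log ((V n).det / V₀.det) := by
        rw [hV0, Real.log_div (hPD n).det_pos.ne' hV₀.det_pos.ne']
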